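/- There exists an invertible matrix W in M_2(ℤ[t]) such that evaluating t at 0 gives the identity matrix and evaluating t at 1 gives the rotation matrix [[0,-1],[1,0]]. Concretely, W = [[1-t², t³-2t],[t, 1-t²]] is such a matrix, with inverse [[1-t², 2t-t³],[-t, 1-t²]]. -/
import Mathlib


open Polynomial

noncomputable def W0 : Matrix (Fin 2) (Fin 2) (Polynomial ℤ) :=
  !![1 - X ^ 2, X ^ 3 - 2 * X; X, 1 - X ^ 2]

noncomputable def W0inv : Matrix (Fin 2) (Fin 2) (Polynomial ℤ) :=
  !![1 - X ^ 2, 2 * X - X ^ 3; -X, 1 - X ^ 2]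

lemma hmul : W0 * W0inv = 1 := by
  rw [W0, W0inv]
  refine Matrix.ext fun i j => ?_
  fin_cases i <;> fin_cases j <;>
    simp [Matrix.mul_apply, Fin.sum_univ_two, Matrix.one_apply] <;> ring

lemma hmul' : W0inv * W0 = 1 := by
  rw [W0, W0inv]
  refine Matrix.ext fun i j => ?_
  fin_cases i <;> fin_cases j <;>
    simp [Matrix.mul_apply, Fin.sum_univ_two, Matrix.one_apply] <;> ring

lemma hev0 : W0.map (Polynomial.eval 0) = 1 := by
  rw [W0]
  refine Matrix.ext fun i j => ?_
  fin_cases i <;> fin_cases j <;> simp [Matrix.one_apply]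

lemma hev1 : W0.map (Polynomial.eval 1) = !![0, -1; 1, 0] := by
  rw [W0]
  refine Matrix.ext fun i j => ?_
  fin_cases i <;> fin_cases j <;> simp

/-- There exists an invertible matrix `W ∈ M₂(ℤ[t])` with `ev₀ W = 1` and
`ev₁ W = [[0,-1],[1,0]]`; concretely `W0` is such a matrix, with inverse `W0inv`. -/
theorem stmt0 :
    (∃ W : Matrix (Fin 2) (Fin 2) (Polynomial ℤ), IsUnit W ∧
      W.map (Polynomial.eval 0) = 1 ∧
      W.map (Polynomial.eval 1) = !![0, -1; 1, 0]) ∧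
    W0 * W0inv = 1 ∧ W0inv * W0 = 1 ∧
    W0.map (Polynomial.eval 0) = 1 ∧
    W0.map (Polynomial.eval 1) = !![0, -1; 1, 0] := by
  refine ⟨⟨W0, ⟨⟨W0, W0inv, hmul, hmul'⟩, rfl⟩, hev0, hev1⟩, hmul, hmul', hev0, hev1⟩
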